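/- For each integer n ≥ 2 set ε_n = e^{−(n²+n+1)}/(n+2) and I_n = [n², n² + n + 1]. Let f : (0,∞) → ℝ satisfy 0 < f(s) ≤ e^{−s} for all s > 0 and f(s) = ε_n + ε_n (s − n²) for all s ∈ I_n and all n ≥ 2, and define g(s) = ∫_s^∞ f(y) dy. Then for every δ > 0 the differential inequality g'(s) + δ g(s) ≤ 0 fails on a set of positive measure; more precisely, for every δ > 0 there exist arbitrarily large n and τ ∈ [0,1] such that −f(n² + τ) + δ g(n² + τ) > 0. -/

import Mathlib

open MeasureTheory Filter Topology

/-- The slope `ε_n = e^{-(n²+n+1)}/(n+2)` of the paper's counterexample. -/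
noncomputable def epsSlope (n : ℕ) : ℝ :=
  Real.exp (-((n : ℝ) ^ 2 + n + 1)) / (n + 2)

/-- the kernel `g(s) = ∫_s^∞ f(y) dy` built from the piecewise-linear `f`
fails the Dafermos condition `g' + δ g ≤ 0`: for every `δ > 0` there are arbitrarily
large `n` and `τ ∈ [0,1]` with `-f(n² + τ) + δ g(n² + τ) > 0`. -/
theorem mgt_dafermos_fails (f : ℝ → ℝ)
    (hf_pos : ∀ s ∈ Set.Ioi (0 : ℝ), 0 < f s)
    (hf_le : ∀ s ∈ Set.Ioi (0 : ℝ), f s ≤ Real.exp (-s))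
    (hf_int : IntegrableOn f (Set.Ioi 0))
    (hf_lin : ∀ n : ℕ, 2 ≤ n → ∀ s ∈ Set.Icc ((n : ℝ) ^ 2) ((n : ℝ) ^ 2 + n + 1),
      f s = epsSlope n + epsSlope n * (s - (n : ℝ) ^ 2)) :
    ∀ δ : ℝ, 0 < δ → ∀ N : ℕ, ∃ n : ℕ, N ≤ n ∧ 2 ≤ n ∧
      ∃ τ ∈ Set.Icc (0 : ℝ) 1,
        -f ((n : ℝ) ^ 2 + τ) +
          δ * (∫ y in Set.Ioi ((n : ℝ) ^ 2 + τ), f y) > 0 := by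
  intro δ hδ N
  set n : ℕ := max N (max 2 (⌈1/δ⌉₊ + 1)) with hn
  have hn2 : 2 ≤ n := le_trans (le_max_left 2 _) (le_max_right _ _)
  have hnceil : (⌈1/δ⌉₊ + 1) ≤ n := le_trans (le_max_right 2 _) (le_max_right _ _)
  refine ⟨n, le_max_left _ _, hn2, 0, by norm_num, ?_⟩
  set ε : ℝ := epsSlope n with hε_def
  have hε : 0 < ε := div_pos (Real.exp_pos _) (by positivity)
  have hn2R : (2:ℝ) ≤ (n:ℝ) := by exact_mod_cast hn2
  have hsq_pos : (0:ℝ) < (n:ℝ)^2 := by nlinarith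
  have hIoi_sub : Set.Ioi ((n:ℝ)^2) ⊆ Set.Ioi (0:ℝ) := fun x hx => lt_trans hsq_pos hx
  have hint : IntegrableOn f (Set.Ioi ((n:ℝ)^2)) := hf_int.mono_set hIoi_sub
  have hIocsub : Set.Ioc ((n:ℝ)^2) ((n:ℝ)^2 + n + 1) ⊆ Set.Ioi ((n:ℝ)^2) :=
    Set.Ioc_subset_Ioi_self
  have hnonneg : 0 ≤ᵐ[volume.restrict (Set.Ioi ((n:ℝ)^2))] f := by
    filter_upwards [ae_restrict_mem measurableSet_Ioi] with x hx
    exact (hf_pos x (hIoi_sub hx)).le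
  have h1 : (∫ y in Set.Ioc ((n:ℝ)^2) ((n:ℝ)^2 + n + 1), f y)
      ≤ ∫ y in Set.Ioi ((n:ℝ)^2), f y :=
    setIntegral_mono_set hint hnonneg (HasSubset.Subset.eventuallyLE hIocsub)
  have hlb : ∀ x ∈ Set.Ioc ((n:ℝ)^2) ((n:ℝ)^2 + n + 1), ε ≤ f x := by
    intro x hx
    have hx' : x ∈ Set.Icc ((n:ℝ)^2) ((n:ℝ)^2 + n + 1) := Set.Ioc_subset_Icc_self hx
    rw [hf_lin n hn2 x hx']
    nlinarith [hx.1.le, hε]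
  have hmeas : volume (Set.Ioc ((n:ℝ)^2) ((n:ℝ)^2 + n + 1)) = ENNReal.ofReal ((n:ℝ)+1) := by
    rw [Real.volume_Ioc]; ring_nf
  have h2 : ε * ((n:ℝ)+1) ≤ ∫ y in Set.Ioc ((n:ℝ)^2) ((n:ℝ)^2 + n + 1), f y := by
    have := setIntegral_ge_of_const_le (μ := volume) (c := ε) measurableSet_Ioc
      (by rw [hmeas]; exact ENNReal.ofReal_ne_top) hlb (hint.mono_set hIocsub)
    rwa [measureReal_def, hmeas, ENNReal.toReal_ofReal (by positivity), smul_eq_mul, mul_comm] at this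
  have hval : f ((n:ℝ)^2 + 0) = ε := by
    rw [hf_lin n hn2 ((n:ℝ)^2 + 0) ⟨by norm_num, by have : (0:ℝ) ≤ (n:ℝ) := Nat.cast_nonneg n; linarith⟩]
    ring
  have hδn : 1 < δ * ((n:ℝ)+1) := by
    have h1δ : (1/δ : ℝ) ≤ (⌈1/δ⌉₊ : ℝ) := Nat.le_ceil _
    have : ((⌈1/δ⌉₊ + 1 : ℕ) : ℝ) ≤ (n:ℝ) := by exact_mod_cast hnceil
    push_cast at this
    have h2 : 1/δ < (n:ℝ) + 1 := by linarith
    calc (1:ℝ) = δ * (1/δ) := by field_simp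
    _ < δ * ((n:ℝ)+1) := by exact mul_lt_mul_of_pos_left h2 hδ
  rw [hval, add_zero]
  have : ε < δ * (ε * ((n:ℝ)+1)) := by nlinarith
  nlinarith [h1, h2, hδ]
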